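/- If there are infinitely many positive integers n such that 2n + 1 and 2n + 3 are both prime (i.e., if the twin prime conjecture holds), then there are infinitely many positive integers n such that the prime sum graph G_{2n} contains a Hamilton cycle. -/

import Mathlib

/-- The prime sum graph of order `m`: vertices are `{1, ..., m}`, and two distinct
vertices are adjacent iff their sum is prime. -/
def primeSumGraph (m : ℕ) : SimpleGraph (Finset.Icc 1 m) where
  Adj i j := i ≠ j ∧ Nat.Prime (i.1 + j.1)
  symm := by
    constructor
    rintro i j ⟨h1, h2⟩
    exact ⟨h1.symm, by rwa [Nat.add_comm]⟩
  loopless := by constructor; rintro i ⟨h, _⟩; exact h rfl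

open SimpleGraph

section Aux
variable {V : Type*} {G : SimpleGraph V}

/-- The walk `f k, f (k+1), ..., f (m-1), f 0`. -/
def auxWalk (G : SimpleGraph V) (f : ℕ → V) (m : ℕ)
    (hadj : ∀ i, i + 1 < m → G.Adj (f i) (f (i+1)))
    (hlast : G.Adj (f (m-1)) (f 0)) : (k : ℕ) → k < m → G.Walk (f k) (f 0)
  | k, hk =>
    if h : k + 1 < m then
      Walk.cons (hadj k h) (auxWalk G f m hadj hlast (k+1) h)
    else
      (Walk.cons hlast Walk.nil).copy (by congr 1; omega) rfl
  termination_by k _ => m - k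

theorem auxWalk_support (G : SimpleGraph V) (f : ℕ → V) (m : ℕ)
    (hadj : ∀ i, i + 1 < m → G.Adj (f i) (f (i+1)))
    (hlast : G.Adj (f (m-1)) (f 0)) :
    ∀ k (hk : k < m),
      (auxWalk G f m hadj hlast k hk).support = (List.range' k (m - k)).map f ++ [f 0]
  | k, hk => by
    rw [auxWalk]
    split_ifs with h
    · rw [Walk.support_cons, auxWalk_support G f m hadj hlast (k+1) h]
      have hmk : m - k = (m - (k+1)) + 1 := by omega
      rw [hmk, List.range'_succ]
      simp
    · have hk1 : k = m - 1 := by omega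
      have hmk : m - k = 1 := by omega
      rw [Walk.support_copy, hmk]
      simp [hk1]
  termination_by k _ => m - k

theorem auxWalk_edges (G : SimpleGraph V) (f : ℕ → V) (m : ℕ) (hm : 3 ≤ m)
    (hinj : ∀ i < m, ∀ j < m, f i = f j → i = j)
    (hadj : ∀ i, i + 1 < m → G.Adj (f i) (f (i+1)))
    (hlast : G.Adj (f (m-1)) (f 0)) :
    ∀ k (hk : k < m), 1 ≤ k →
      s(f 0, f 1) ∉ (auxWalk G f m hadj hlast k hk).edges
  | k, hk, h1 => by
    rw [auxWalk]
    split_ifs with h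
    · rw [Walk.edges_cons, List.mem_cons]
      push_neg
      refine ⟨?_, auxWalk_edges G f m hm hinj hadj hlast (k+1) h (by omega)⟩
      intro he
      rw [Sym2.eq_iff] at he
      rcases he with ⟨h01, _⟩ | ⟨h01, _⟩
      · have := hinj 0 (by omega) k hk h01; omega
      · have := hinj 0 (by omega) (k+1) h h01; omega
    · rw [Walk.edges_copy]
      simp only [Walk.edges_cons, Walk.edges_nil, List.mem_singleton]
      intro he
      rw [Sym2.eq_iff] at he
      rcases he with ⟨h01, _⟩ | ⟨_, h1m⟩
      · have := hinj 0 (by omega) (m-1) (by omega) h01; omega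
      · have := hinj 1 (by omega) (m-1) (by omega) h1m; omega
  termination_by k _ _ => m - k

theorem ham_exists [DecidableEq V] (G : SimpleGraph V) (f : ℕ → V) (m : ℕ) (hm : 3 ≤ m)
    (hinj : ∀ i < m, ∀ j < m, f i = f j → i = j)
    (hadj : ∀ i, i + 1 < m → G.Adj (f i) (f (i+1)))
    (hlast : G.Adj (f (m-1)) (f 0))
    (hsurj : ∀ v : V, ∃ i, i < m ∧ f i = v) :
    ∃ a, ∃ w : G.Walk a a, w.IsHamiltonianCycle := by

  have h1m : 1 < m := by omega
  refine ⟨f 0, Walk.cons (hadj 0 h1m) (auxWalk G f m hadj hlast 1 h1m), ?_⟩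
  have hsupp := auxWalk_support G f m hadj hlast 1 h1m
  have hmapnd : ((List.range' 1 (m - 1)).map f).Nodup := by
    refine List.Nodup.map_on ?_ (List.nodup_range')
    intro x hx y hy hxy
    rw [List.mem_range'_1] at hx hy
    exact hinj x (by omega) y (by omega) hxy
  have hf0 : f 0 ∉ (List.range' 1 (m - 1)).map f := by
    intro hmem
    rw [List.mem_map] at hmem
    obtain ⟨i, hi, hfi⟩ := hmem
    rw [List.mem_range'_1] at hi
    have := hinj i (by omega) 0 (by omega) hfi
    omega
  have hnd : (auxWalk G f m hadj hlast 1 h1m).support.Nodup := by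
    rw [hsupp, List.nodup_append]
    refine ⟨hmapnd, List.nodup_singleton _, ?_⟩
    intro a ha b hb
    rw [List.mem_singleton] at hb
    subst hb
    exact fun he => hf0 (he ▸ ha)
  rw [Walk.isHamiltonianCycle_iff_isCycle_and_support_count_tail_eq_one]
  constructor
  · rw [Walk.cons_isCycle_iff]
    exact ⟨Walk.IsPath.mk' hnd, auxWalk_edges G f m hm hinj hadj hlast 1 h1m le_rfl⟩
  · intro a
    obtain ⟨i, hi, rfl⟩ := hsurj a
    rw [Walk.support_cons, List.tail_cons, hsupp, List.count_append]
    rcases Nat.eq_zero_or_pos i with rfl | hpos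
    · rw [List.count_eq_zero_of_not_mem hf0]
      simp
    · have hmem : f i ∈ (List.range' 1 (m - 1)).map f :=
        List.mem_map.mpr ⟨i, List.mem_range'_1.mpr ⟨hpos, by omega⟩, rfl⟩
      rw [List.count_eq_one_of_mem hmapnd hmem]
      have : f i ≠ f 0 := fun he => by have := hinj i hi 0 (by omega) he; omega
      simp [List.count_singleton, this, Ne.symm this]

end Aux

/-- The vertex sequence `1, 2n, 3, 2n-2, 5, ..., 2n-1, 2`. -/
def psf (n : ℕ) (hn : 1 ≤ n) (i : ℕ) : (Finset.Icc 1 (2*n) : Finset ℕ) :=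
  ⟨if i < 2*n then (if Even i then i+1 else 2*n-i+1) else 1, by
    rw [Finset.mem_Icc]
    split_ifs with h1 h2
    · omega
    · rw [Nat.not_even_iff] at h2; omega
    · omega⟩

lemma psf_val (n : ℕ) (hn : 1 ≤ n) (i : ℕ) :
    (psf n hn i : ℕ) = if i < 2*n then (if Even i then i+1 else 2*n-i+1) else 1 := rfl

theorem psg_ham (n : ℕ) (hn : 2 ≤ n) (p1 : Nat.Prime (2*n+1)) (p2 : Nat.Prime (2*n+3)) :
    ∃ a, ∃ w : (primeSumGraph (2*n)).Walk a a, w.IsHamiltonianCycle := by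
  have hn1 : 1 ≤ n := by omega
  set f := psf n hn1 with hfdef
  have hinj : ∀ i < 2*n, ∀ j < 2*n, f i = f j → i = j := by
    intro i hi j hj hij
    rw [Subtype.ext_iff, psf_val, psf_val, if_pos hi, if_pos hj] at hij
    by_cases hi2 : Even i <;> by_cases hj2 : Even j <;>
      simp only [hi2, hj2, if_true, if_false] at hij <;>
      simp only [Nat.even_iff, Nat.not_even_iff] at hi2 hj2 <;> omega
  have hadj : ∀ i, i + 1 < 2*n → (primeSumGraph (2*n)).Adj (f i) (f (i+1)) := by
    intro i hi1
    have hi : i < 2*n := by omega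
    refine ⟨fun he => by have := hinj i hi (i+1) hi1 he; omega, ?_⟩
    by_cases hi2 : Even i
    · have hi3 : ¬ Even (i+1) := by simp [Nat.even_add_one, hi2]
      have hsum : (f i : ℕ) + (f (i+1) : ℕ) = 2*n+1 := by
        rw [psf_val, psf_val, if_pos hi, if_pos hi1, if_pos hi2, if_neg hi3]
        omega
      exact hsum ▸ p1
    · have hi3 : Even (i+1) := by simp [Nat.even_add_one, hi2]
      have hi0 : 1 ≤ i := by
        rcases Nat.eq_zero_or_pos i with rfl | h
        · exact absurd (Even.zero) hi2
        · exact h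
      have hsum : (f i : ℕ) + (f (i+1) : ℕ) = 2*n+3 := by
        rw [psf_val, psf_val, if_pos hi, if_pos hi1, if_neg hi2, if_pos hi3]
        omega
      exact hsum ▸ p2
  have hlast : (primeSumGraph (2*n)).Adj (f (2*n-1)) (f 0) := by
    have h1 : ¬ Even (2*n-1) := by rw [Nat.not_even_iff]; omega
    have hv1 : (f (2*n-1) : ℕ) = 2 := by
      rw [psf_val, if_pos (by omega), if_neg h1]; omega
    have hv0 : (f 0 : ℕ) = 1 := by
      rw [psf_val, if_pos (by omega), if_pos Even.zero]
    refine ⟨fun he => ?_, ?_⟩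
    · rw [Subtype.ext_iff, hv1, hv0] at he; omega
    · rw [hv1, hv0]; exact Nat.prime_three
  have hsurj : ∀ v : (Finset.Icc 1 (2*n) : Finset ℕ), ∃ i, i < 2*n ∧ f i = v := by
    intro v
    obtain ⟨hv1, hv2⟩ := Finset.mem_Icc.mp v.2
    by_cases hv : Even (v : ℕ)
    · have hv' := Nat.even_iff.mp hv
      refine ⟨2*n+1-(v : ℕ), by omega, ?_⟩
      have hodd : ¬ Even (2*n+1-(v : ℕ)) := by rw [Nat.not_even_iff]; omega
      rw [Subtype.ext_iff, psf_val, if_pos (by omega), if_neg hodd]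
      omega
    · have hv' := Nat.not_even_iff.mp hv
      refine ⟨(v : ℕ)-1, by omega, ?_⟩
      have heven : Even ((v : ℕ)-1) := by rw [Nat.even_iff]; omega
      rw [Subtype.ext_iff, psf_val, if_pos (by omega), if_pos heven]
      omega
  exact ham_exists (primeSumGraph (2*n)) f (2*n) (by omega) hinj hadj hlast hsurj


/-- If the twin prime conjecture holds (there are infinitely many `n` with `2n+1`
and `2n+3` both prime), then there are infinitely many positive integers `n` such
that `G_{2n}` contains a Hamilton cycle. -/
theorem infinitely_many_hamiltonian_of_twin_primes
    (h : {n : ℕ | 0 < n ∧ Nat.Prime (2 * n + 1) ∧ Nat.Prime (2 * n + 3)}.Infinite) :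
    {n : ℕ | 0 < n ∧
      ∃ a, ∃ w : (primeSumGraph (2 * n)).Walk a a, w.IsHamiltonianCycle}.Infinite := by
  have hinf := h.diff (Set.finite_Iio 2)
  refine hinf.mono ?_
  rintro n ⟨⟨hpos, p1, p2⟩, hn2⟩
  have hn : 2 ≤ n := not_lt.mp (by simpa using hn2)
  exact ⟨hpos, psg_ham n hn p1 p2⟩
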